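/- Let Σ be a finite alphabet of size q ≥ 2, n ≥ 1, δ ∈ (0,1), and set t = n(1 − 1/q)(1 − δ). Consider the messageless secret-key code where the key sk is uniform on Σ^n, Enc(sk) = sk, and Dec(sk, γ) outputs valid if γ = sk, tampered if 0 < dist(γ, sk) ≤ t, and invalid if dist(γ, sk) > t. Then: (a) correctness holds, i.e. Dec(sk, Enc(sk)) = valid for every sk; (b) soundness: for every fixed γ̂ ∈ Σ^n, P_sk[Dec(sk, γ̂) ≠ invalid] = P_sk[dist(γ̂, sk) ≤ t] ≤ exp(−δ²(1 − 1/q)n/3); and (c) tamper detection: for every (possibly randomized) tampering function f : Σ^n → Σ^n that always changes at most t coordinates of its input, P[Dec(sk, f(sk)) ≠ tampered ∧ f(sk) ≠ sk] = 0. Hence this code achieves tamper detection at rate α = (1 − 1/q)(1 − δ) with soundness error exponentially small in n(1 − 1/q). -/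

import Mathlib

open Finset Classical

/-- Decoding outcomes of a messageless secret-key code. -/
inductive DecOut where
  | valid
  | invalid
  | tampered
deriving DecidableEq

/-- The decoder of the simple construction with threshold `t`: `valid` if `γ = sk`,
`tampered` if `0 < dist(γ, sk) ≤ t`, and `invalid` if `dist(γ, sk) > t`. -/
noncomputable def simpleDec {S : Type} [Fintype S] [DecidableEq S] {n : ℕ}
    (t : ℝ) (sk γ : Fin n → S) : DecOut :=
  if γ = sk then DecOut.valid
  else if (hammingDist γ sk : ℝ) ≤ t then DecOut.tampered
  else DecOut.invalid

lemma exp_neg_le_quad {x : ℝ} (hx : 0 ≤ x) : Real.exp (-x) ≤ 1 - x + x ^ 2 / 2 := by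
  have h := Real.quadratic_le_exp_of_nonneg hx
  have h1 : (0:ℝ) < 1 + x + x ^ 2 / 2 := by nlinarith
  have h3 : Real.exp (-x) ≤ (1 + x + x ^ 2 / 2)⁻¹ := by
    rw [Real.exp_neg]
    exact inv_anti₀ h1 h
  refine h3.trans ?_
  rw [inv_le_iff_one_le_mul₀ h1]
  nlinarith

lemma hamming_cast_sum {S : Type} [DecidableEq S] {n : ℕ} (γ sk : Fin n → S) :
    (hammingDist γ sk : ℝ) = ∑ i, if γ i = sk i then (0:ℝ) else 1 := by
  unfold hammingDist
  rw [Finset.card_eq_sum_ones]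
  push_cast
  rw [Finset.sum_filter]
  simp [ite_not]

/-- The simple construction (uniform key `sk` on `Σ^n`,
`Enc(sk) = sk`, threshold decoding at `t = n(1 - 1/q)(1 - δ)`): (a) correctness;
(b) soundness: for every fixed `γ̂`,
`P_sk[Dec(sk, γ̂) ≠ invalid] = P_sk[dist(γ̂, sk) ≤ t] ≤ exp(-δ²(1 - 1/q)n/3)`; and
(c) perfect tamper detection against every (possibly randomized) tampering function
that always changes at most `t` coordinates. -/
theorem stmt_8
    {S : Type} [Fintype S] [DecidableEq S]
    {n : ℕ} (hn : 1 ≤ n) (hq : 2 ≤ Fintype.card S)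
    (δ : ℝ) (hδ0 : 0 < δ) (hδ1 : δ < 1)
    (t : ℝ) (ht : t = n * (1 - (Fintype.card S : ℝ)⁻¹) * (1 - δ)) :
    (∀ sk : Fin n → S, simpleDec t sk sk = DecOut.valid) ∧
    (∀ γ : Fin n → S,
      ((∑ sk : Fin n → S,
          if simpleDec t sk γ ≠ DecOut.invalid then ((Fintype.card S : ℝ) ^ n)⁻¹ else 0)
        = (∑ sk : Fin n → S,
          if (hammingDist γ sk : ℝ) ≤ t then ((Fintype.card S : ℝ) ^ n)⁻¹ else 0)) ∧
      ((∑ sk : Fin n → S,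
          if (hammingDist γ sk : ℝ) ≤ t then ((Fintype.card S : ℝ) ^ n)⁻¹ else 0)
        ≤ Real.exp (-(δ ^ 2 * (1 - (Fintype.card S : ℝ)⁻¹) * n / 3)))) ∧
    (∀ (R : Type) [Fintype R] (wr : R → ℝ), (∀ r, 0 ≤ wr r) → (∑ r, wr r = 1) →
      ∀ f : (Fin n → S) → R → Fin n → S,
        (∀ γ r, (hammingDist (f γ r) γ : ℝ) ≤ t) →
        (∑ sk : Fin n → S, ∑ r,
          if simpleDec t sk (f sk r) ≠ DecOut.tampered ∧ f sk r ≠ sk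
          then ((Fintype.card S : ℝ) ^ n)⁻¹ * wr r else 0) = 0) := by
  set q : ℝ := (Fintype.card S : ℝ) with hqdef
  have hq2 : (2:ℝ) ≤ q := by
    rw [hqdef]; exact_mod_cast hq
  have hq0 : (0:ℝ) < q := by linarith
  set p : ℝ := 1 - q⁻¹ with hpdef
  have hp0 : 0 < p := by
    have : q⁻¹ < 1 := by
      rw [inv_lt_one_iff₀]; right; linarith
    simp only [hpdef]; linarith
  have hp1 : p < 1 := by
    have : 0 < q⁻¹ := inv_pos.mpr hq0
    simp only [hpdef]; linarith
  have hn0 : (0:ℝ) ≤ (n:ℝ) := Nat.cast_nonneg n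
  have ht0 : 0 ≤ t := by
    rw [ht]
    exact mul_nonneg (mul_nonneg hn0 hp0.le) (by linarith)
  refine ⟨?_, ?_, ?_⟩
  · intro sk; simp [simpleDec]
  · intro γ
    constructor
    · apply Finset.sum_congr rfl
      intro sk _
      congr 1
      unfold simpleDec
      by_cases h1 : γ = sk
      · subst h1
        simp [hammingDist_self, ht0]
      · by_cases h2 : (hammingDist γ sk : ℝ) ≤ t <;> simp [h1, h2]
    · -- Chernoff bound
      set E : ℝ := Real.exp (-δ) with hEdef
      have hE0 : 0 < E := Real.exp_pos _
      have hE1 : E < 1 := by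
        rw [hEdef, Real.exp_lt_one_iff]; linarith
      have hEle : E ≤ 1 - δ + δ ^ 2 / 2 := exp_neg_le_quad hδ0.le
      have hqn : (0:ℝ) < q ^ n := pow_pos hq0 n
      have step1 : (∑ sk : Fin n → S,
            if (hammingDist γ sk : ℝ) ≤ t then (q ^ n)⁻¹ else 0)
          ≤ (q ^ n)⁻¹ * Real.exp (δ * t) *
            ∑ sk : Fin n → S, Real.exp (-δ * (hammingDist γ sk : ℝ)) := by
        rw [Finset.mul_sum]
        apply Finset.sum_le_sum
        intro sk _
        by_cases h : (hammingDist γ sk : ℝ) ≤ t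
        · simp only [h, if_true]
          rw [mul_assoc, ← Real.exp_add]
          have h1 : (1:ℝ) ≤ Real.exp (δ * t + -δ * (hammingDist γ sk : ℝ)) := by
            rw [show (1:ℝ) = Real.exp 0 from Real.exp_zero.symm]
            apply Real.exp_le_exp.mpr
            nlinarith [mul_nonneg hδ0.le (sub_nonneg.mpr h)]
          nlinarith [inv_pos.mpr hqn]
        · simp only [h, if_false]
          positivity
      have step2 : ∀ sk : Fin n → S, Real.exp (-δ * (hammingDist γ sk : ℝ))
          = ∏ i, (if γ i = sk i then (1:ℝ) else E) := by
        intro sk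
        rw [hamming_cast_sum, Finset.mul_sum, Real.exp_sum]
        apply Finset.prod_congr rfl
        intro i _
        by_cases h : γ i = sk i <;> simp [h, hEdef]
      have inner : ∀ i : Fin n, (∑ a : S, if γ i = a then (1:ℝ) else E) = 1 + (q - 1) * E := by
        intro i
        have h1 : ∀ a : S, (if γ i = a then (1:ℝ) else E)
            = (if γ i = a then 1 - E else 0) + E := by
          intro a; by_cases h : γ i = a <;> simp [h]
        rw [Finset.sum_congr rfl (fun a _ => h1 a), Finset.sum_add_distrib,
          Finset.sum_ite_eq, if_pos (Finset.mem_univ _), Finset.sum_const,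
          Finset.card_univ, nsmul_eq_mul, ← hqdef]
        ring
      have step3 : (∑ sk : Fin n → S, Real.exp (-δ * (hammingDist γ sk : ℝ)))
          = (1 + (q - 1) * E) ^ n := by
        rw [Finset.sum_congr rfl (fun sk _ => step2 sk)]
        have hswap := Finset.prod_univ_sum (fun _ : Fin n => (Finset.univ : Finset S))
          (fun i a => if γ i = a then (1:ℝ) else E)
        rw [Fintype.piFinset_univ] at hswap
        rw [← hswap, Finset.prod_congr rfl (fun i _ => inner i), Finset.prod_const,
          Finset.card_univ, Fintype.card_fin]
      have key : 1 + (q - 1) * E = q * (1 + p * (E - 1)) := by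
        rw [hpdef]
        field_simp
        ring
      have hx0 : 0 < 1 + p * (E - 1) := by nlinarith
      have hxe : 1 + p * (E - 1) ≤ Real.exp (p * (E - 1)) := by
        have := Real.add_one_le_exp (p * (E - 1)); linarith
      calc (∑ sk : Fin n → S, if (hammingDist γ sk : ℝ) ≤ t then (q ^ n)⁻¹ else 0)
          ≤ (q ^ n)⁻¹ * Real.exp (δ * t) *
            ∑ sk : Fin n → S, Real.exp (-δ * (hammingDist γ sk : ℝ)) := step1
        _ = Real.exp (δ * t) * (1 + p * (E - 1)) ^ n := by
            rw [step3, key, mul_pow]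
            field_simp
        _ ≤ Real.exp (δ * t) * Real.exp (p * (E - 1)) ^ n := by
            apply mul_le_mul_of_nonneg_left _ (Real.exp_pos _).le
            exact pow_le_pow_left₀ hx0.le hxe n
        _ = Real.exp (δ * t + n * (p * (E - 1))) := by
            rw [← Real.exp_nat_mul, ← Real.exp_add]
        _ ≤ Real.exp (-(δ ^ 2 * p * n / 3)) := by
            apply Real.exp_le_exp.mpr
            rw [ht]
            have hm : (0:ℝ) ≤ (n:ℝ) * p := mul_nonneg hn0 hp0.le
            have hkey : δ * (1 - δ) + (E - 1) ≤ -(δ ^ 2 / 3) := by nlinarith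
            have h2 : δ * ((n:ℝ) * p * (1 - δ)) + (n:ℝ) * (p * (E - 1))
                = ((n:ℝ) * p) * (δ * (1 - δ) + (E - 1)) := by ring
            have h3 : -(δ ^ 2 * p * (n:ℝ) / 3) = ((n:ℝ) * p) * (-(δ ^ 2 / 3)) := by ring
            rw [h2, h3]
            exact mul_le_mul_of_nonneg_left hkey hm
  · intro R _ wr hwr hsum f hf
    apply Finset.sum_eq_zero
    intro sk _
    apply Finset.sum_eq_zero
    intro r _
    rw [if_neg]
    rintro ⟨hdec, hne⟩
    apply hdec
    unfold simpleDec
    rw [if_neg hne, if_pos (hf sk r)]
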